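/- There exists a constant c > 0 such that for every z ∈ ℂ with −π ≤ Im z ≤ 0 and cosh(z/2) ≠ 0: |(z + iπ) · tanh(z/2)| ≤ c·(|Re z| + 1). -/

import Mathlib

open Complex Real

private lemma cosh_decomp (w : ℂ) :
    Complex.cosh w = (Real.cosh w.re * Real.cos w.im : ℝ) +
      (Real.sinh w.re * Real.sin w.im : ℝ) * Complex.I := by
  conv_lhs => rw [← Complex.re_add_im w]
  rw [Complex.cosh_add, Complex.cosh_mul_I, Complex.sinh_mul_I,
    ← Complex.ofReal_cosh, ← Complex.ofReal_sinh, ← Complex.ofReal_cos, ← Complex.ofReal_sin]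
  push_cast
  ring

private lemma sinh_decomp (w : ℂ) :
    Complex.sinh w = (Real.sinh w.re * Real.cos w.im : ℝ) +
      (Real.cosh w.re * Real.sin w.im : ℝ) * Complex.I := by
  conv_lhs => rw [← Complex.re_add_im w]
  rw [Complex.sinh_add, Complex.cosh_mul_I, Complex.sinh_mul_I,
    ← Complex.ofReal_cosh, ← Complex.ofReal_sinh, ← Complex.ofReal_cos, ← Complex.ofReal_sin]
  push_cast
  ring

private lemma sq_abs_cosh (w : ℂ) :
    ‖Complex.cosh w‖ ^ 2 = Real.sinh w.re ^ 2 + Real.cos w.im ^ 2 := by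
  rw [Complex.sq_norm, cosh_decomp, Complex.normSq_add_mul_I]
  have h1 := Real.cosh_sq w.re
  have h2 := Real.sin_sq_add_cos_sq w.im
  nlinarith [h1, h2]

private lemma sq_abs_sinh (w : ℂ) :
    ‖Complex.sinh w‖ ^ 2 = Real.sinh w.re ^ 2 + Real.sin w.im ^ 2 := by
  rw [Complex.sq_norm, sinh_decomp, Complex.normSq_add_mul_I]
  have h1 := Real.cosh_sq w.re
  have h2 := Real.sin_sq_add_cos_sq w.im
  nlinarith [h1, h2]

private lemma sq_self_le_sq_sinh (a : ℝ) : a ^ 2 ≤ Real.sinh a ^ 2 := by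
  rcases le_or_gt 0 a with h | h
  · have := Real.self_le_sinh_iff.mpr h
    nlinarith
  · have h' : Real.sinh a ≤ a := by
      have : -a ≤ Real.sinh (-a) := Real.self_le_sinh_iff.mpr (by linarith)
      rw [Real.sinh_neg] at this; linarith
    nlinarith

set_option maxHeartbeats 1000000 in
/-- On the strip `−π ≤ Im z ≤ 0` one has `|(z+iπ)·tanh(z/2)| ≤ c·(|Re z|+1)`. -/
theorem tanh_strip_bound :
    ∃ c : ℝ, 0 < c ∧ ∀ z : ℂ, -Real.pi ≤ z.im → z.im ≤ 0 →
      Complex.cosh (z / 2) ≠ 0 →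
      ‖(z + Real.pi * Complex.I) * Complex.tanh (z / 2)‖ ≤
        c * (|z.re| + 1) := by
  refine ⟨2 * Real.pi, by positivity, fun z him1 him2 hc => ?_⟩
  set w : ℂ := z / 2 with hw
  have hwre : w.re = z.re / 2 := by simp [hw]
  have hwim : w.im = z.im / 2 := by simp [hw]
  have hpi := Real.pi_pos
  -- abbreviations
  set C := ‖Complex.cosh w‖ with hC
  set S := ‖Complex.sinh w‖ with hS
  set A := ‖w + (Real.pi / 2 : ℝ) * Complex.I‖ with hA
  have hCpos : 0 < C := by
    rw [hC]; exact (norm_pos_iff.mpr hc)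
  have hSnn : 0 ≤ S := norm_nonneg _
  have hAnn : 0 ≤ A := norm_nonneg _
  clear_value C S A
  -- Step 1 : S ≤ C + 1
  have hS_le : S ≤ C + 1 := by
    have h1 : S ^ 2 = Real.sinh w.re ^ 2 + Real.sin w.im ^ 2 := by rw [hS]; exact sq_abs_sinh w
    have h2 : C ^ 2 = Real.sinh w.re ^ 2 + Real.cos w.im ^ 2 := by rw [hC]; exact sq_abs_cosh w
    have h3 : Real.sin w.im ^ 2 ≤ 1 := Real.sin_sq_le_one _
    have h4 : 0 ≤ Real.cos w.im ^ 2 := sq_nonneg _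
    nlinarith [hCpos.le, hSnn]
  -- Step 2 : 2 * A ≤ π * C
  have hA_le_C : 2 * A ≤ Real.pi * C := by
    have hb1 : -(Real.pi / 2) ≤ w.im := by rw [hwim]; linarith
    have hb2 : w.im ≤ 0 := by rw [hwim]; linarith
    have hAsq : A ^ 2 = w.re ^ 2 + (w.im + Real.pi / 2) ^ 2 := by
      rw [hA, Complex.sq_norm]
      have : w + (Real.pi / 2 : ℝ) * Complex.I =
          (w.re : ℝ) + (w.im + Real.pi / 2 : ℝ) * Complex.I := by
        apply Complex.ext <;> simp
      rw [this, Complex.normSq_add_mul_I]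
    have hCsq : C ^ 2 = Real.sinh w.re ^ 2 + Real.cos w.im ^ 2 := by rw [hC]; exact sq_abs_cosh w
    -- cos w.im ≥ (2/π)(w.im + π/2)
    have hcos : 2 / Real.pi * (w.im + Real.pi / 2) ≤ Real.cos w.im := by
      have := Real.mul_le_sin (x := w.im + Real.pi / 2) (by linarith) (by linarith)
      rwa [Real.sin_add_pi_div_two] at this
    have hcos' : 2 * (w.im + Real.pi / 2) ≤ Real.cos w.im * Real.pi := by
      rw [div_mul_eq_mul_div, div_le_iff₀ hpi] at hcos
      linarith
    have hsinh := sq_self_le_sq_sinh w.re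
    have h2pi := Real.two_le_pi
    have key : A ^ 2 ≤ (Real.pi / 2) ^ 2 * C ^ 2 := by
      rw [hAsq, hCsq]
      have hm := mul_self_le_mul_self (show (0:ℝ) ≤ 2 * (w.im + Real.pi / 2) by linarith) hcos'
      have h4 : (4:ℝ) ≤ Real.pi ^ 2 := by nlinarith
      have h5 : Real.sinh w.re ^ 2 ≤ (Real.pi / 2) ^ 2 * Real.sinh w.re ^ 2 := by
        nlinarith [sq_nonneg (Real.sinh w.re)]
      have h6 : (w.im + Real.pi / 2) ^ 2 ≤ (Real.pi / 2) ^ 2 * Real.cos w.im ^ 2 := by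
        nlinarith [hm]
      nlinarith [hsinh, h5, h6]
    have hsq : (2 * A) ^ 2 ≤ (Real.pi * C) ^ 2 := by nlinarith [key]
    exact (pow_le_pow_iff_left₀ (by linarith) (by positivity) two_ne_zero).mp hsq
  -- Step 3 : 2 * A ≤ |z.re| + π
  have hA_le : 2 * A ≤ |z.re| + Real.pi := by
    have := Complex.norm_le_abs_re_add_abs_im (w + (Real.pi / 2 : ℝ) * Complex.I)
    have hre : (w + (Real.pi / 2 : ℝ) * Complex.I).re = w.re := by simp
    have him : (w + (Real.pi / 2 : ℝ) * Complex.I).im = w.im + Real.pi / 2 := by simp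
    rw [hre, him] at this
    have h1 : |w.re| = |z.re| / 2 := by rw [hwre, abs_div]; simp
    have h2 : |w.im + Real.pi / 2| ≤ Real.pi / 2 := by
      rw [abs_le]
      constructor <;> rw [hwim] <;> linarith
    rw [← hA] at this
    linarith
  -- Assemble
  have habs : ‖(z + Real.pi * Complex.I) * Complex.tanh w‖ = 2 * A * (S / C) := by
    rw [norm_mul, Complex.tanh_eq_sinh_div_cosh, norm_div, ← hS, ← hC]
    have h0 : z + (Real.pi : ℂ) * Complex.I = 2 * (w + (Real.pi / 2 : ℝ) * Complex.I) := by
      rw [hw]; push_cast; ring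
    rw [h0, norm_mul, ← hA, Complex.norm_two]
  rw [habs]
  have hEq : 2 * A * (S / C) = (2 * A * S) / C := by ring
  rw [hEq, div_le_iff₀ hCpos]
  have h1 : 2 * A * S ≤ 2 * A * (C + 1) := mul_le_mul_of_nonneg_left hS_le (by linarith)
  have h2 : 2 * A * (C + 1) = 2 * A * C + 2 * A := by ring
  have h3 : 2 * A * C ≤ (|z.re| + Real.pi) * C := mul_le_mul_of_nonneg_right hA_le hCpos.le
  have habs0 : 0 ≤ |z.re| := abs_nonneg _
  have h4 : (|z.re| + Real.pi) * C + Real.pi * C = (|z.re| + 2 * Real.pi) * C := by ring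
  have h5 : (|z.re| + 2 * Real.pi) * C ≤ 2 * Real.pi * (|z.re| + 1) * C := by
    refine mul_le_mul_of_nonneg_right ?_ hCpos.le
    nlinarith [Real.two_le_pi, habs0]
  linarith [hA_le_C]
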